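/- Every countable group G is a quotient of a free group on countably many generators by the normal closure of a set of elements, each of which is a product of at most three generators (no inverses). -/

import Mathlib

/-- `w` is a product of at most three generators (no inverses) of the free group on `ℕ`. -/
def IsPosWordLen3 (w : FreeGroup ℕ) : Prop :=
  (∃ i, w = FreeGroup.of i) ∨
  (∃ i j, w = FreeGroup.of i * FreeGroup.of j) ∨
  (∃ i j k, w = FreeGroup.of i * FreeGroup.of j * FreeGroup.of k)

/-- Every countable group is a quotient of a free group on countably many generators by the
normal closure of a set of elements, each a product of at most three generators. -/
theorem countable_group_quotient_free_by_short_positive_words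
    (G : Type) [Group G] [Countable G] :
    ∃ R : Set (FreeGroup ℕ),
      (∀ w ∈ R, IsPosWordLen3 w) ∧
      Nonempty (G ≃* FreeGroup ℕ ⧸ Subgroup.normalClosure R) := by
  obtain ⟨f, hf⟩ := exists_surjective_nat G
  set φ : FreeGroup ℕ →* G := FreeGroup.lift f with hφ
  have hφof : ∀ n, φ (FreeGroup.of n) = f n := fun n => FreeGroup.lift_apply_of
  have hs : Function.Surjective φ := by
    intro g
    obtain ⟨n, rfl⟩ := hf g
    exact ⟨FreeGroup.of n, hφof n⟩
  set R : Set (FreeGroup ℕ) := {w | IsPosWordLen3 w ∧ w ∈ φ.ker} with hR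
  refine ⟨R, fun w hw => hw.1, ?_⟩
  -- choice functions
  set e : ℕ := (hf 1).choose with he_def
  have he : f e = 1 := (hf 1).choose_spec
  set k : ℕ → ℕ → ℕ := fun m n => (hf ((f m * f n)⁻¹)).choose with hk_def
  have hk : ∀ m n, f (k m n) = (f m * f n)⁻¹ := fun m n => (hf ((f m * f n)⁻¹)).choose_spec
  set N := Subgroup.normalClosure R with hN
  set π : FreeGroup ℕ →* FreeGroup ℕ ⧸ N := QuotientGroup.mk' N with hπ
  have hmem : ∀ w ∈ R, π w = 1 := by
    intro w hw
    rw [hπ, QuotientGroup.mk'_apply, QuotientGroup.eq_one_iff]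
    exact Subgroup.subset_normalClosure hw
  -- relations in the quotient
  have hA : ∀ m n, π (FreeGroup.of m) * π (FreeGroup.of n) * π (FreeGroup.of (k m n)) = 1 := by
    intro m n
    have hmemR : (FreeGroup.of m * FreeGroup.of n * FreeGroup.of (k m n)) ∈ R := by
      refine ⟨Or.inr (Or.inr ⟨m, n, k m n, rfl⟩), ?_⟩
      simp only [MonoidHom.mem_ker, map_mul, hφof, hk]
      group
    have := hmem _ hmemR
    simpa [map_mul] using this
  have hone : ∀ n, f n = 1 → π (FreeGroup.of n) = 1 := by
    intro n hn
    apply hmem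
    exact ⟨Or.inl ⟨n, rfl⟩, by simp [MonoidHom.mem_ker, hφof, hn]⟩
  have hE : π (FreeGroup.of e) = 1 := hone e he
  have hInv : ∀ n, π (FreeGroup.of (k n e)) = (π (FreeGroup.of n))⁻¹ := by
    intro n
    have := hA n e
    rw [hE, mul_one] at this
    exact eq_inv_of_mul_eq_one_right this
  have hfInv : ∀ n, f (k n e) = (f n)⁻¹ := by
    intro n; rw [hk, he, mul_one]
  have hMul : ∀ m n, π (FreeGroup.of (k (k m n) e)) = π (FreeGroup.of m) * π (FreeGroup.of n) := by
    intro m n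
    rw [hInv]
    have := hA m n
    have h2 : π (FreeGroup.of (k m n)) = (π (FreeGroup.of m) * π (FreeGroup.of n))⁻¹ :=
      eq_inv_of_mul_eq_one_right this
    rw [h2, inv_inv]
  have hfMul : ∀ m n, f (k (k m n) e) = f m * f n := by
    intro m n; rw [hfInv, hk, inv_inv]
  -- main lemma: every element is equivalent mod N to a single generator
  have hmain : ∀ w : FreeGroup ℕ, ∃ n, f n = φ w ∧ π w = π (FreeGroup.of n) := by
    intro w
    induction w using FreeGroup.induction_on with
    | C1 => exact ⟨e, by simp [he], by simp [hE]⟩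
    | of x => exact ⟨x, (hφof x).symm, rfl⟩
    | inv_of x _ =>
        refine ⟨k x e, ?_, ?_⟩
        · show f (k x e) = φ (FreeGroup.of x)⁻¹
          rw [hfInv, map_inv, hφof]
        · show π ((FreeGroup.of x)⁻¹) = π (FreeGroup.of (k x e))
          rw [hInv, map_inv]
    | mul u v hu hv =>
        obtain ⟨m, hm1, hm2⟩ := hu
        obtain ⟨n, hn1, hn2⟩ := hv
        refine ⟨k (k m n) e, ?_, ?_⟩
        · rw [hfMul, hm1, hn1, map_mul]
        · rw [hMul, map_mul, hm2, hn2]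
  -- kernel of φ equals the normal closure
  have hker : N = φ.ker := by
    apply le_antisymm
    · rw [hN]
      apply Subgroup.normalClosure_le_normal
      intro w hw
      exact hw.2
    · intro w hw
      obtain ⟨n, hn1, hn2⟩ := hmain w
      have hfn : f n = 1 := by rw [hn1]; exact hw
      have : π w = 1 := by rw [hn2]; exact hone n hfn
      rwa [hπ, QuotientGroup.mk'_apply, QuotientGroup.eq_one_iff] at this
  exact ⟨((QuotientGroup.quotientKerEquivOfSurjective φ hs).symm.trans
    (QuotientGroup.quotientMulEquivOfEq hker.symm))⟩
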